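/- Let A be a unital complex algebra, φ a linear functional on A with φ(1) = 1, and x₁,…,x_n ∈ A. If the joint distribution of (x₁,…,x_n) with respect to φ is invariant under the algebraic coaction of 𝓑_s(n), then for every k ≥ 1 and all i₁,…,i_k ∈ {1,…,n}: φ(x_{i₁}·x_{i₂}⋯x_{i_k}) = n^{−k}·Σ_{j₁,…,j_k=1}^n φ(x_{j₁}·x_{j₂}⋯x_{j_k}). In particular, any two moments φ(x_{i₁}⋯x_{i_k}) and φ(x_{i₁'}⋯x_{i_k'}) of the same degree k coincide. -/

import Mathlib

universe u

open scoped Matrix.Norms.L2Operator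

section ULiftInstances

variable {R : Type*}

instance uliftStar [Star R] : Star (ULift.{u} R) := ⟨fun x => ⟨star x.down⟩⟩

@[simp] lemma ULift.star_down' [Star R] (x : ULift.{u} R) : (star x).down = star x.down := rfl

instance uliftStarRing [NonUnitalNonAssocSemiring R] [StarRing R] : StarRing (ULift.{u} R) where
  star_involutive x := ULift.down_injective (star_star x.down)
  star_mul x y := ULift.down_injective (star_mul x.down y.down)
  star_add x y := ULift.down_injective (star_add x.down y.down)

instance uliftCStarRing [NonUnitalNormedRing R] [StarRing R] [CStarRing R] :
    CStarRing (ULift.{u} R) where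
  norm_mul_self_le x := CStarRing.norm_mul_self_le x.down

noncomputable instance uliftNormedAlgebra [NormedRing R] [NormedAlgebra ℂ R] :
    NormedAlgebra ℂ (ULift.{u} R) where
  norm_smul_le r x := norm_smul_le r x.down

end ULiftInstances

section MatrixModel

variable (n : ℕ) [NeZero n]

noncomputable def Pmat : Matrix (Fin n) (Fin n) ℂ := Matrix.of fun _ _ => (n : ℂ)⁻¹

noncomputable def Umat (j k : Fin n) : Matrix (Fin n) (Fin n) ℂ :=
  Matrix.single (j + k) (j + k) 1

omit [NeZero n] in
lemma Umat_star (j k : Fin n) : star (Umat n j k) = Umat n j k := by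
  ext a b
  simp [Umat, Matrix.star_apply, Matrix.single, and_comm]

omit [NeZero n] in
lemma Umat_idem (j k : Fin n) : Umat n j k * Umat n j k = Umat n j k := by
  simp [Umat]

omit [NeZero n] in
lemma Umat_row (i k l : Fin n) (h : k ≠ l) : Umat n i k * Umat n i l = 0 := by
  apply Matrix.single_mul_single_of_ne
  simpa using h

omit [NeZero n] in
lemma Umat_col (i k l : Fin n) (h : k ≠ l) : Umat n k i * Umat n l i = 0 := by
  apply Matrix.single_mul_single_of_ne
  simpa using h

omit [NeZero n] in
lemma Pmat_star : star (Pmat n) = Pmat n := by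
  ext a b
  simp [Pmat, Matrix.star_apply]

lemma Pmat_idem : Pmat n * Pmat n = Pmat n := by
  have hn : (n : ℂ) ≠ 0 := Nat.cast_ne_zero.mpr (NeZero.ne n)
  ext a b
  simp [Pmat, Matrix.mul_apply, Finset.sum_const]
  field_simp

lemma Umat_sum (i : Fin n) : (∑ k, Umat n k i) = 1 := by
  have h : (∑ k, Umat n k i) = ∑ m, Matrix.single m m (1:ℂ) :=
    Fintype.sum_equiv (Equiv.addRight i) _ _ (fun k => rfl)
  rw [h]
  ext a b
  simp only [Matrix.sum_apply, Matrix.single, Matrix.of_apply, Matrix.one_apply,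
    ite_and]
  rw [Finset.sum_ite_eq' (Finset.univ) a (fun x => if x = b then (1:ℂ) else 0)]
  simp

omit [NeZero n] in
lemma PUP (j i : Fin n) : Pmat n * Umat n j i * Pmat n = (n : ℂ)⁻¹ • Pmat n := by
  ext a b
  simp [Pmat, Umat, Matrix.mul_apply, Matrix.single, Finset.sum_ite_eq,
    ite_and, mul_ite, Finset.mul_sum]

end MatrixModel

/-- Auxiliary: products of elements absorbing a projection with a scalar factor. -/
lemma prod_absorb {C : Type*} [Ring C] [Algebra ℂ C] (P : C) (c : ℂ) :
    ∀ (m : ℕ) (g : Fin (m + 1) → C), (∀ t, g t * P = c • P) →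
      (List.ofFn g).prod * P = c ^ (m + 1) • P := by
  intro m
  induction m with
  | zero =>
    intro g hg
    simpa using hg 0
  | succ m ih =>
    intro g hg
    rw [List.ofFn_succ, List.prod_cons, mul_assoc,
      ih (fun t => g t.succ) (fun t => hg t.succ), mul_smul_comm, hg 0, smul_smul, ← pow_succ]

/-- The family `(u_{ij}, P)` satisfies the defining relations of the boolean permutation
quantum semigroup `𝓑_s(n)`. -/
def BsRel {C : Type u} [Ring C] [StarRing C] {n : ℕ} (u : Fin n → Fin n → C) (P : C) : Prop :=
  (∀ i j, star (u i j) = u i j) ∧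
  (∀ i j, u i j * u i j = u i j) ∧
  (∀ i k l, k ≠ l → u i k * u i l = 0) ∧
  (∀ i k l, k ≠ l → u k i * u l i = 0) ∧
  star P = P ∧ P * P = P ∧
  (∀ i, (∑ k, u k i) * P = P)

/-- Invariance of the joint distribution of `(x₁,…,x_n)` with respect to `φ` under the
algebraic coaction of `𝓑_s(n)`. -/
def BsAlgInvariant {A : Type*} [Ring A] [Algebra ℂ A] {n : ℕ}
    (φ : A →ₗ[ℂ] ℂ) (x : Fin n → A) : Prop :=
  ∀ (C : Type u) [NormedRing C] [StarRing C] [CStarRing C] [NormedAlgebra ℂ C]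
    [CompleteSpace C] (u : Fin n → Fin n → C) (P : C), BsRel u P →
    ∀ (m : ℕ) (i : Fin (m + 1) → Fin n),
      φ ((List.ofFn fun t => x (i t)).prod) • P =
        ∑ j : Fin (m + 1) → Fin n,
          φ ((List.ofFn fun t => x (j t)).prod) •
            ((List.ofFn fun t => P * u (j t) (i t)).prod * P)

/-- If the joint distribution of `(x₁,…,x_n)` with respect to `φ` is invariant under the
algebraic coaction of `𝓑_s(n)`, then every moment of degree `k` equals the average
`n^{-k}·Σ_j φ(x_{j₁}⋯x_{j_k})`; in particular any two moments of the same degree agree. -/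
theorem stmt14 {A : Type*} [Ring A] [Algebra ℂ A] (n : ℕ)
    (φ : A →ₗ[ℂ] ℂ) (hφ : φ 1 = 1) (x : Fin n → A)
    (hinv : BsAlgInvariant.{u} φ x) :
    (∀ (k : ℕ) (i : Fin (k + 1) → Fin n),
      φ ((List.ofFn fun t => x (i t)).prod) =
        ((n : ℂ) ^ (k + 1))⁻¹ *
          ∑ j : Fin (k + 1) → Fin n, φ ((List.ofFn fun t => x (j t)).prod)) ∧
    (∀ (k : ℕ) (i i' : Fin (k + 1) → Fin n),
      φ ((List.ofFn fun t => x (i t)).prod) = φ ((List.ofFn fun t => x (i' t)).prod)) := by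
  rcases Nat.eq_zero_or_pos n with hn0 | hn0
  · subst hn0
    exact ⟨fun k i => (i 0).elim0, fun k i i' => (i 0).elim0⟩
  haveI : NeZero n := ⟨hn0.ne'⟩
  have hnC : (n : ℂ) ≠ 0 := Nat.cast_ne_zero.mpr (NeZero.ne n)
  set M := Matrix (Fin n) (Fin n) ℂ with hM
  haveI : CompleteSpace M := FiniteDimensional.complete ℂ M
  set C := ULift.{u} M with hC
  set uC : Fin n → Fin n → C := fun j k => ⟨Umat n j k⟩ with huC
  set PC : C := ⟨Pmat n⟩ with hPC
  have hrel : BsRel uC PC := by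
    refine ⟨fun i j => ULift.down_injective (Umat_star n i j),
      fun i j => ULift.down_injective (Umat_idem n i j),
      fun i k l h => ULift.down_injective (Umat_row n i k l h),
      fun i k l h => ULift.down_injective (Umat_col n i k l h),
      ULift.down_injective (Pmat_star n),
      ULift.down_injective (Pmat_idem n),
      fun i => ?_⟩
    apply ULift.down_injective
    have hsum : (∑ k, uC k i).down = ∑ k, Umat n k i :=
      map_sum (ULift.ringEquiv : ULift M ≃+* M) _ _
    show (∑ k, uC k i).down * Pmat n = Pmat n
    rw [hsum, Umat_sum, one_mul]
  have hPUP : ∀ j i : Fin n, PC * uC j i * PC = (n : ℂ)⁻¹ • PC := fun j i =>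
    ULift.down_injective (PUP n j i)
  have key : ∀ (k : ℕ) (i : Fin (k + 1) → Fin n),
      φ ((List.ofFn fun t => x (i t)).prod) =
        ((n : ℂ) ^ (k + 1))⁻¹ *
          ∑ j : Fin (k + 1) → Fin n, φ ((List.ofFn fun t => x (j t)).prod) := by
    intro k i
    have h := hinv C uC PC hrel k i
    have hprod : ∀ j : Fin (k + 1) → Fin n,
        (List.ofFn fun t => PC * uC (j t) (i t)).prod * PC = ((n : ℂ)⁻¹) ^ (k + 1) • PC := by
      intro j
      exact prod_absorb PC ((n : ℂ)⁻¹) k _ (fun t => hPUP (j t) (i t))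
    simp only [hprod, smul_smul] at h
    rw [← Finset.sum_smul] at h
    have hentry : ∀ c : ℂ, (c • PC).down 0 0 = c * (n : ℂ)⁻¹ := by
      intro c
      rw [ULift.smul_down]
      show (c • (Matrix.of fun _ _ => (n:ℂ)⁻¹) : Matrix (Fin n) (Fin n) ℂ) 0 0 = c * (n:ℂ)⁻¹
      rw [Matrix.smul_apply, Matrix.of_apply, smul_eq_mul]
    have h2 := congrArg (fun z : C => z.down 0 0) h
    rw [hentry, hentry] at h2
    have h4 := mul_right_cancel₀ (inv_ne_zero hnC) h2
    rw [h4, ← Finset.sum_mul, mul_comm, inv_pow]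
  exact ⟨key, fun k i i' => by rw [key k i, key k i']⟩
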